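/- Let p = 2l and 0 < η ≤ 1/(1000l). For x, z ∈ ℝ^{d1} and y ∈ Y, set ȳ := P_Y(y + η∇_y f(x,y)). Then ‖x*(y,z) − x*(z)‖² ≤ (10/(μη²l))‖y − ȳ‖² + (10/(μl))‖∇_x f̂(x,y,z)‖² + (40/l²)‖∇_x f̂(x,y,z)‖². -/

import Mathlib

open Set Metric
open scoped RealInnerProductSpace

noncomputable def gradx {d1 d2 : ℕ}
    (f : EuclideanSpace ℝ (Fin d1) → EuclideanSpace ℝ (Fin d2) → ℝ)
    (x : EuclideanSpace ℝ (Fin d1)) (y : EuclideanSpace ℝ (Fin d2)) :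
    EuclideanSpace ℝ (Fin d1) :=
  gradient (fun x' => f x' y) x

noncomputable def grady {d1 d2 : ℕ}
    (f : EuclideanSpace ℝ (Fin d1) → EuclideanSpace ℝ (Fin d2) → ℝ)
    (x : EuclideanSpace ℝ (Fin d1)) (y : EuclideanSpace ℝ (Fin d2)) :
    EuclideanSpace ℝ (Fin d2) :=
  gradient (fun y' => f x y') y

/-- `f` is differentiable and `l`-smooth: the gradient is `l`-Lipschitz with respect to the
Euclidean norm on the product space (stated in squared form). -/
def IsLSmooth {d1 d2 : ℕ} (l : ℝ)
    (f : EuclideanSpace ℝ (Fin d1) → EuclideanSpace ℝ (Fin d2) → ℝ) : Prop :=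
  Differentiable ℝ (fun w : EuclideanSpace ℝ (Fin d1) × EuclideanSpace ℝ (Fin d2) => f w.1 w.2) ∧
  ∀ x₁ x₂ y₁ y₂,
    ‖gradx f x₁ y₁ - gradx f x₂ y₂‖ ^ 2 + ‖grady f x₁ y₁ - grady f x₂ y₂‖ ^ 2
      ≤ l ^ 2 * (‖x₁ - x₂‖ ^ 2 + ‖y₁ - y₂‖ ^ 2)

/-- `f̂(x, y, z) = f(x, y) + (p/2)‖x − z‖²`. -/
noncomputable def fhat {d1 d2 : ℕ}
    (f : EuclideanSpace ℝ (Fin d1) → EuclideanSpace ℝ (Fin d2) → ℝ) (p : ℝ)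
    (x : EuclideanSpace ℝ (Fin d1)) (y : EuclideanSpace ℝ (Fin d2))
    (z : EuclideanSpace ℝ (Fin d1)) : ℝ :=
  f x y + p / 2 * ‖x - z‖ ^ 2


section Aux
variable {d1 d2 : ℕ} {l : ℝ}
  {f : EuclideanSpace ℝ (Fin d1) → EuclideanSpace ℝ (Fin d2) → ℝ}

lemma diffx (hf : IsLSmooth l f) (y : EuclideanSpace ℝ (Fin d2)) :
    Differentiable ℝ (fun x' => f x' y) :=
  hf.1.comp (differentiable_id.prodMk (differentiable_const y))

lemma diffy (hf : IsLSmooth l f) (x : EuclideanSpace ℝ (Fin d1)) :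
    Differentiable ℝ (fun y' => f x y') :=
  hf.1.comp ((differentiable_const x).prodMk differentiable_id)

lemma hasGradx (hf : IsLSmooth l f) (x : EuclideanSpace ℝ (Fin d1))
    (y : EuclideanSpace ℝ (Fin d2)) :
    HasGradientAt (fun x' => f x' y) (gradx f x y) x :=
  ((diffx hf y) x).hasGradientAt

lemma hasGrady (hf : IsLSmooth l f) (x : EuclideanSpace ℝ (Fin d1))
    (y : EuclideanSpace ℝ (Fin d2)) :
    HasGradientAt (fun y' => f x y') (grady f x y) y :=
  ((diffy hf x) y).hasGradientAt

lemma sq_le_sq'' {a b : ℝ} (hb : 0 ≤ b) (h : a ^ 2 ≤ b ^ 2) (ha : 0 ≤ a) : a ≤ b := by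
  nlinarith

lemma gradx_lip (hf : IsLSmooth l f) (hl : 0 ≤ l) (x₁ x₂ : EuclideanSpace ℝ (Fin d1))
    (y₁ y₂ : EuclideanSpace ℝ (Fin d2)) :
    ‖gradx f x₁ y₁ - gradx f x₂ y₂‖ ≤ l * (‖x₁ - x₂‖ + ‖y₁ - y₂‖) := by
  have h := hf.2 x₁ x₂ y₁ y₂
  refine sq_le_sq'' (by positivity) ?_ (norm_nonneg _)
  nlinarith [sq_nonneg ‖grady f x₁ y₁ - grady f x₂ y₂‖, norm_nonneg (x₁ - x₂),
    norm_nonneg (y₁ - y₂), mul_nonneg (mul_nonneg (mul_nonneg hl hl) (norm_nonneg (x₁-x₂))) (norm_nonneg (y₁-y₂))]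

lemma grady_lip (hf : IsLSmooth l f) (hl : 0 ≤ l) (x₁ x₂ : EuclideanSpace ℝ (Fin d1))
    (y₁ y₂ : EuclideanSpace ℝ (Fin d2)) :
    ‖grady f x₁ y₁ - grady f x₂ y₂‖ ≤ l * (‖x₁ - x₂‖ + ‖y₁ - y₂‖) := by
  have h := hf.2 x₁ x₂ y₁ y₂
  refine sq_le_sq'' (by positivity) ?_ (norm_nonneg _)
  nlinarith [sq_nonneg ‖gradx f x₁ y₁ - gradx f x₂ y₂‖, norm_nonneg (x₁ - x₂),
    norm_nonneg (y₁ - y₂), mul_nonneg (mul_nonneg (mul_nonneg hl hl) (norm_nonneg (x₁-x₂))) (norm_nonneg (y₁-y₂))]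

end Aux
section Aux2
variable {d1 d2 : ℕ} {l : ℝ}
  {f : EuclideanSpace ℝ (Fin d1) → EuclideanSpace ℝ (Fin d2) → ℝ}

lemma curve_deriv (hf : IsLSmooth l f) (a v : EuclideanSpace ℝ (Fin d1))
    (y : EuclideanSpace ℝ (Fin d2)) (t : ℝ) :
    HasDerivAt (fun t : ℝ => f (a + t • v) y) ⟪gradx f (a + t • v) y, v⟫ t := by
  have hcurve : HasDerivAt (fun t : ℝ => a + t • v) v t := by
    simpa using ((hasDerivAt_id t).smul_const v).const_add a
  have hF := (hasGradx hf (a + t • v) y).hasFDerivAt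
  have := hF.comp_hasDerivAt t hcurve
  simp only [InnerProductSpace.toDual_apply_apply] at this
  exact this

lemma gradx_cont (hf : IsLSmooth l f) (hl : 0 ≤ l) (y : EuclideanSpace ℝ (Fin d2)) :
    Continuous (fun x' => gradx f x' y) := by
  have : LipschitzWith l.toNNReal (fun x' => gradx f x' y) := by
    refine LipschitzWith.of_dist_le_mul fun p q => ?_
    rw [dist_eq_norm, dist_eq_norm, Real.coe_toNNReal l hl]
    simpa using gradx_lip hf hl p q y y
  exact this.continuous

lemma descent_x (hf : IsLSmooth l f) (hl : 0 ≤ l) (a b : EuclideanSpace ℝ (Fin d1))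
    (y : EuclideanSpace ℝ (Fin d2)) :
    |f b y - f a y - ⟪gradx f a y, b - a⟫| ≤ l / 2 * ‖b - a‖ ^ 2 := by
  set v := b - a with hv
  have hab : a + (1:ℝ) • v = b := by simp [hv]
  have hg : ∀ t : ℝ, HasDerivAt (fun t : ℝ => f (a + t • v) y)
      ⟪gradx f (a + t • v) y, v⟫ t := fun t => curve_deriv hf a v y t
  have hcont : Continuous (fun t : ℝ => ⟪gradx f (a + t • v) y, v⟫) := by
    apply Continuous.inner
    · exact (gradx_cont hf hl y).comp (by continuity)
    · exact continuous_const
  have hFTC : ∫ t in (0:ℝ)..1, ⟪gradx f (a + t • v) y, v⟫ = f b y - f a y := by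
    have := intervalIntegral.integral_eq_sub_of_hasDerivAt
      (f := fun t : ℝ => f (a + t • v) y)
      (f' := fun t : ℝ => ⟪gradx f (a + t • v) y, v⟫)
      (fun t _ => hg t) (hcont.intervalIntegrable 0 1)
    rw [this]
    simp only [one_smul, zero_smul, add_zero, hv, add_sub_cancel]
  have hconst : ∫ _t in (0:ℝ)..1, ⟪gradx f a y, v⟫ = ⟪gradx f a y, v⟫ := by simp
  have hdiff : f b y - f a y - ⟪gradx f a y, v⟫
      = ∫ t in (0:ℝ)..1, (⟪gradx f (a + t • v) y, v⟫ - ⟪gradx f a y, v⟫) := by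
    rw [intervalIntegral.integral_sub (hcont.intervalIntegrable 0 1)
      (continuous_const.intervalIntegrable 0 1), hFTC, hconst]
  rw [hdiff]
  have hbd : ∀ t ∈ Set.Icc (0:ℝ) 1,
      |⟪gradx f (a + t • v) y, v⟫ - ⟪gradx f a y, v⟫| ≤ l * ‖v‖ ^ 2 * t := by
    intro t ht
    rw [← inner_sub_left]
    refine (abs_real_inner_le_norm _ _).trans ?_
    have h1 : ‖gradx f (a + t • v) y - gradx f a y‖ ≤ l * (t * ‖v‖) := by
      have := gradx_lip hf hl (a + t • v) a y y
      simpa [norm_smul, abs_of_nonneg ht.1] using this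
    calc ‖gradx f (a + t • v) y - gradx f a y‖ * ‖v‖ ≤ (l * (t * ‖v‖)) * ‖v‖ := by
          exact mul_le_mul_of_nonneg_right h1 (norm_nonneg v)
      _ = l * ‖v‖ ^ 2 * t := by ring
  calc |∫ t in (0:ℝ)..1, (⟪gradx f (a + t • v) y, v⟫ - ⟪gradx f a y, v⟫)|
      ≤ ∫ t in (0:ℝ)..1, |⟪gradx f (a + t • v) y, v⟫ - ⟪gradx f a y, v⟫| :=
        intervalIntegral.abs_integral_le_integral_abs zero_le_one
    _ ≤ ∫ t in (0:ℝ)..1, l * ‖v‖ ^ 2 * t := by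
        refine intervalIntegral.integral_mono_on zero_le_one ?_ ?_ hbd
        · exact (hcont.sub continuous_const).abs.intervalIntegrable 0 1
        · exact (continuous_const.mul continuous_id).intervalIntegrable 0 1
    _ = l / 2 * ‖v‖ ^ 2 := by
        rw [intervalIntegral.integral_const_mul, integral_id]
        ring

end Aux2
section Aux3
variable {d1 d2 : ℕ} {l : ℝ}
  {f : EuclideanSpace ℝ (Fin d1) → EuclideanSpace ℝ (Fin d2) → ℝ}

lemma normsq_expand (a b z : EuclideanSpace ℝ (Fin d1)) :
    ‖b - z‖ ^ 2 = ‖a - z‖ ^ 2 + 2 * ⟪a - z, b - a⟫ + ‖b - a‖ ^ 2 := by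
  have : b - z = (a - z) + (b - a) := by abel
  rw [this, norm_add_sq_real]

lemma fhat_lower (hf : IsLSmooth l f) (hl : 0 ≤ l)
    (a b z : EuclideanSpace ℝ (Fin d1)) (y : EuclideanSpace ℝ (Fin d2)) :
    fhat f (2*l) a y z + ⟪gradx f a y + (2*l) • (a - z), b - a⟫ + l/2 * ‖b - a‖ ^ 2
      ≤ fhat f (2*l) b y z := by
  have hd := abs_le.1 (descent_x hf hl a b y)
  have hn := normsq_expand a b z
  have hi : ⟪gradx f a y + (2*l) • (a - z), b - a⟫
      = ⟪gradx f a y, b - a⟫ + 2*l*⟪a - z, b - a⟫ := by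
    rw [inner_add_left, real_inner_smul_left]
  simp only [fhat] at *
  nlinarith [hd.1, hd.2]

lemma fhat_upper (hf : IsLSmooth l f) (hl : 0 ≤ l)
    (a b z : EuclideanSpace ℝ (Fin d1)) (y : EuclideanSpace ℝ (Fin d2)) :
    fhat f (2*l) b y z
      ≤ fhat f (2*l) a y z + ⟪gradx f a y + (2*l) • (a - z), b - a⟫ + 3*l/2 * ‖b - a‖ ^ 2 := by
  have hd := abs_le.1 (descent_x hf hl a b y)
  have hn := normsq_expand a b z
  have hi : ⟪gradx f a y + (2*l) • (a - z), b - a⟫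
      = ⟪gradx f a y, b - a⟫ + 2*l*⟪a - z, b - a⟫ := by
    rw [inner_add_left, real_inner_smul_left]
  simp only [fhat] at *
  nlinarith [hd.1, hd.2]

lemma zero_of_inner_quad {n : ℕ} (g : EuclideanSpace ℝ (Fin n)) (C : ℝ) (hC : 0 < C)
    (h : ∀ h' : EuclideanSpace ℝ (Fin n), 0 ≤ ⟪g, h'⟫ + C * ‖h'‖ ^ 2) : g = 0 := by
  have h1 := h (-(1/(2*C)) • g)
  rw [real_inner_smul_right, real_inner_self_eq_norm_sq, norm_smul] at h1
  have hg : ‖g‖ ^ 2 ≤ 0 := by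
    have habs : |(-(1/(2*C)))| = 1/(2*C) := by
      rw [abs_neg, abs_of_nonneg (by positivity)]
    rw [Real.norm_eq_abs, habs] at h1
    have e1 : -(1/(2*C)) * ‖g‖^2 + C * (1/(2*C)*‖g‖)^2 = -(‖g‖^2) / (4*C) := by
      field_simp; ring
    rw [e1] at h1
    have h4 : (0:ℝ) < 4*C := by linarith
    have h5 : (0:ℝ) ≤ -(‖g‖^2) := by
      calc (0:ℝ) ≤ -(‖g‖^2)/(4*C)*(4*C) := mul_nonneg h1 h4.le
        _ = -(‖g‖^2) := by field_simp
    linarith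
  have : ‖g‖ = 0 := by nlinarith [norm_nonneg g, sq_nonneg ‖g‖]
  simpa using this

lemma grad_fhat_zero (hf : IsLSmooth l f) (hl : 0 < l)
    (c z : EuclideanSpace ℝ (Fin d1)) (y : EuclideanSpace ℝ (Fin d2))
    (hmin : ∀ b, fhat f (2*l) c y z ≤ fhat f (2*l) b y z) :
    gradx f c y + (2*l) • (c - z) = 0 := by
  refine zero_of_inner_quad _ (3*l/2) (by positivity) fun h' => ?_
  have h1 := hmin (c + h')
  have h2 := fhat_upper hf hl.le c (c + h') z y
  have h3 : c + h' - c = h' := by abel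
  rw [h3] at h2
  linarith

end Aux3
section Aux4
open Filter Topology

lemma slope_deriv_le (ψ : ℝ → ℝ) (d : ℝ) (hd : HasDerivAt ψ d 0)
    (h : ∀ t ∈ Set.Ioo (0:ℝ) 1, ψ t ≤ ψ 0) : d ≤ 0 := by
  have hslope : Tendsto (slope ψ 0) (𝓝[>] 0) (𝓝 d) :=
    (hasDerivAt_iff_tendsto_slope.1 hd).mono_left
      (nhdsWithin_mono 0 fun t ht => ne_of_gt ht)
  refine le_of_tendsto hslope ?_
  filter_upwards [Ioo_mem_nhdsGT_of_mem (Set.mem_Ico.2 ⟨le_refl (0:ℝ), zero_lt_one⟩)]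
    with t ht
  rw [slope_def_field]
  have h1 := h t ht
  have h2 : (0:ℝ) < t - 0 := by simpa using ht.1
  exact div_nonpos_of_nonpos_of_nonneg (by linarith) (by linarith)

lemma slope_deriv_ge (ψ : ℝ → ℝ) (d A B : ℝ) (hd : HasDerivAt ψ d 0) (hB : 0 ≤ B)
    (h : ∀ t ∈ Set.Ioo (0:ℝ) 1, ψ 0 + t * (A + (1 - t) * B) ≤ ψ t) : A + B ≤ d := by
  have hslope : Tendsto (slope ψ 0) (𝓝[>] 0) (𝓝 d) :=
    (hasDerivAt_iff_tendsto_slope.1 hd).mono_left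
      (nhdsWithin_mono 0 fun t ht => ne_of_gt ht)
  have hg : Tendsto (fun t : ℝ => A + (1 - t) * B) (𝓝[>] 0) (𝓝 (A + B)) := by
    have h0 : Tendsto (fun t : ℝ => A + (1 - t) * B) (𝓝 0) (𝓝 (A + (1 - 0) * B)) :=
      (continuous_const.add ((continuous_const.sub continuous_id).mul
        continuous_const)).tendsto 0
    simpa using h0.mono_left nhdsWithin_le_nhds
  refine le_of_tendsto_of_tendsto hg hslope ?_
  filter_upwards [Ioo_mem_nhdsGT_of_mem (Set.mem_Ico.2 ⟨le_refl (0:ℝ), zero_lt_one⟩)]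
    with t ht
  rw [slope_def_field]
  have h1 := h t ht
  have h2 : (0:ℝ) < t := ht.1
  rw [le_div_iff₀ (by simpa using h2)]
  have : (t - 0) = t := by ring
  rw [this]
  nlinarith [h1]

end Aux4
section Aux5
variable {d1 d2 : ℕ} {l μ : ℝ}
  {f : EuclideanSpace ℝ (Fin d1) → EuclideanSpace ℝ (Fin d2) → ℝ}
  {Y : Set (EuclideanSpace ℝ (Fin d2))}

lemma curve_deriv_y (hf : IsLSmooth l f) (x : EuclideanSpace ℝ (Fin d1))
    (a v : EuclideanSpace ℝ (Fin d2)) (t : ℝ) :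
    HasDerivAt (fun t : ℝ => f x (a + t • v)) ⟪grady f x (a + t • v), v⟫ t := by
  have hcurve : HasDerivAt (fun t : ℝ => a + t • v) v t := by
    simpa using ((hasDerivAt_id t).smul_const v).const_add a
  have hF := (hasGrady hf x (a + t • v)).hasFDerivAt
  have := hF.comp_hasDerivAt t hcurve
  simp only [InnerProductSpace.toDual_apply_apply] at this
  exact this

/-- first-order strong concavity inequality -/
lemma sconc_fo (hf : IsLSmooth l f) (hμ : 0 ≤ μ) (hconc : ∀ x, StrongConcaveOn Y μ (f x))
    (x : EuclideanSpace ℝ (Fin d1)) {a b : EuclideanSpace ℝ (Fin d2)}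
    (ha : a ∈ Y) (hb : b ∈ Y) :
    f x b ≤ f x a + ⟪grady f x a, b - a⟫ - μ/2 * ‖b - a‖ ^ 2 := by
  have hd : HasDerivAt (fun t : ℝ => f x (a + t • (b - a))) ⟪grady f x a, b - a⟫ 0 := by
    have := curve_deriv_y hf x a (b - a) 0
    simpa using this
  have key := slope_deriv_ge (fun t : ℝ => f x (a + t • (b - a))) ⟪grady f x a, b - a⟫
    (f x b - f x a) (μ/2 * ‖b - a‖ ^ 2) hd (by positivity) ?_
  · linarith [key]
  intro t ht
  have hcc := (hconc x).2 hb ha ht.1.le (by linarith [ht.2] : (0:ℝ) ≤ 1 - t) (by ring)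
  have hpt : t • b + (1 - t) • a = a + t • (b - a) := by module
  rw [hpt] at hcc
  simp only [smul_eq_mul] at hcc
  simp only [zero_smul, add_zero]
  nlinarith [hcc]

/-- first-order condition at a constrained maximizer -/
lemma max_fo (hf : IsLSmooth l f) (hYconv : Convex ℝ Y)
    (x : EuclideanSpace ℝ (Fin d1)) {w : EuclideanSpace ℝ (Fin d2)} (hw : w ∈ Y)
    (hmax : ∀ v ∈ Y, f x v ≤ f x w) {v : EuclideanSpace ℝ (Fin d2)} (hv : v ∈ Y) :
    ⟪grady f x w, v - w⟫ ≤ 0 := by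
  have hd : HasDerivAt (fun t : ℝ => f x (w + t • (v - w))) ⟪grady f x w, v - w⟫ 0 := by
    have := curve_deriv_y hf x w (v - w) 0
    simpa using this
  refine slope_deriv_le _ _ hd fun t ht => ?_
  have hmem : w + t • (v - w) ∈ Y := by
    have := hYconv hw hv (by linarith [ht.2] : (0:ℝ) ≤ 1 - t) ht.1.le (by ring)
    have hpt : (1 - t) • w + t • v = w + t • (v - w) := by module
    rwa [hpt] at this
  simpa using hmax _ hmem

end Aux5
section Aux6
variable {d1 d2 : ℕ} {l μ : ℝ}
  {f : EuclideanSpace ℝ (Fin d1) → EuclideanSpace ℝ (Fin d2) → ℝ}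
  {Y : Set (EuclideanSpace ℝ (Fin d2))}

lemma proj_char {projY : EuclideanSpace ℝ (Fin d2) → EuclideanSpace ℝ (Fin d2)}
    (hYconv : Convex ℝ Y) (hprojY_mem : ∀ v, projY v ∈ Y)
    (hprojY : ∀ v, ∀ w ∈ Y, ‖v - projY v‖ ≤ ‖v - w‖)
    (u : EuclideanSpace ℝ (Fin d2)) {w : EuclideanSpace ℝ (Fin d2)} (hw : w ∈ Y) :
    ⟪u - projY u, w - projY u⟫ ≤ 0 := by
  set P := projY u with hP
  by_contra hc
  push_neg at hc
  set c := ⟪u - P, w - P⟫ with hcdef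
  have hwP : w ≠ P := by
    intro he
    rw [he] at hcdef
    simp at hcdef
    rw [hcdef] at hc
    exact lt_irrefl _ hc
  have hN : (0:ℝ) < ‖w - P‖ ^ 2 :=
    pow_pos (norm_pos_iff.mpr (sub_ne_zero.2 hwP)) 2
  set N := ‖w - P‖ ^ 2 with hNdef
  set t := min 1 (c / N) with ht
  have ht0 : 0 < t := lt_min one_pos (div_pos hc hN)
  have ht1 : t ≤ 1 := min_le_left _ _
  have hmem : P + t • (w - P) ∈ Y := by
    have := hYconv (hprojY_mem u) hw (by linarith : (0:ℝ) ≤ 1 - t) ht0.le (by ring)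
    have hpt : (1 - t) • P + t • w = P + t • (w - P) := by module
    rwa [hpt] at this
  have hle := hprojY u _ hmem
  have hsq : ‖u - P‖ ^ 2 ≤ ‖u - (P + t • (w - P))‖ ^ 2 := by
    have h0 := norm_nonneg (u - P)
    nlinarith [hle]
  have hexp : ‖u - (P + t • (w - P))‖ ^ 2
      = ‖u - P‖ ^ 2 - 2 * t * c + t ^ 2 * N := by
    have he : u - (P + t • (w - P)) = (u - P) - t • (w - P) := by abel
    rw [he, norm_sub_sq_real, real_inner_smul_right, norm_smul]
    rw [Real.norm_eq_abs, abs_of_nonneg ht0.le]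
    ring
  rw [hexp] at hsq
  have h2 : 2 * c ≤ t * N := by nlinarith
  have h3 : t * N ≤ c := by
    calc t * N ≤ (c / N) * N := by
          exact mul_le_mul_of_nonneg_right (min_le_right _ _) hN.le
      _ = c := by field_simp
  linarith

lemma sSup_img {ystar : EuclideanSpace ℝ (Fin d1) → EuclideanSpace ℝ (Fin d2)}
    (hYne : Y.Nonempty) (hystar_mem : ∀ x, ystar x ∈ Y)
    (hystar : ∀ x, ∀ y ∈ Y, f x y ≤ f x (ystar x))
    (x z : EuclideanSpace ℝ (Fin d1)) :
    sSup ((fun v => fhat f (2*l) x v z) '' Y) = fhat f (2*l) x (ystar x) z := by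
  refine le_antisymm ?_ ?_
  · refine csSup_le (hYne.image _) ?_
    rintro _ ⟨v, hv, rfl⟩
    exact add_le_add_left (hystar x v hv) _
  · refine le_csSup ⟨fhat f (2*l) x (ystar x) z, ?_⟩ ⟨ystar x, hystar_mem x, rfl⟩
    rintro _ ⟨v, hv, rfl⟩
    exact add_le_add_left (hystar x v hv) _

lemma ystar_lip (hf : IsLSmooth l f) (hl : 0 < l) (hμ : 0 < μ)
    (hconc : ∀ x, StrongConcaveOn Y μ (f x)) (hYconv : Convex ℝ Y)
    {ystar : EuclideanSpace ℝ (Fin d1) → EuclideanSpace ℝ (Fin d2)}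
    (hystar_mem : ∀ x, ystar x ∈ Y)
    (hystar : ∀ x, ∀ y ∈ Y, f x y ≤ f x (ystar x))
    (x₁ x₂ : EuclideanSpace ℝ (Fin d1)) :
    ‖ystar x₂ - ystar x₁‖ ≤ (1 + 3*l/μ) * ‖x₂ - x₁‖ := by
  set w₁ := ystar x₁
  set w₂ := ystar x₂
  set k := ‖w₂ - w₁‖ with hk
  set u := ‖x₂ - x₁‖ with hu
  have hi1 : f x₁ w₂ ≤ f x₁ w₁ - μ/2 * k ^ 2 := by
    have h1 := sconc_fo hf hμ.le hconc x₁ (hystar_mem x₁) (hystar_mem x₂)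
    have h2 := max_fo hf hYconv x₁ (hystar_mem x₁) (hystar x₁) (hystar_mem x₂)
    linarith
  have hi2 : f x₂ w₁ ≤ f x₂ w₂ - μ/2 * k ^ 2 := by
    have h1 := sconc_fo hf hμ.le hconc x₂ (hystar_mem x₂) (hystar_mem x₁)
    have h2 := max_fo hf hYconv x₂ (hystar_mem x₂) (hystar x₂) (hystar_mem x₁)
    have : ‖w₁ - w₂‖ = k := by rw [hk, ← norm_neg]; congr 1; abel
    rw [this] at h1
    linarith
  have hi3 := (abs_le.1 (descent_x hf hl.le x₁ x₂ w₂)).2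
  have hi4 := (abs_le.1 (descent_x hf hl.le x₂ x₁ w₁)).2
  have hip : ⟪gradx f x₁ w₂, x₂ - x₁⟫ + ⟪gradx f x₂ w₁, x₁ - x₂⟫
      = ⟪gradx f x₁ w₂ - gradx f x₂ w₁, x₂ - x₁⟫ := by
    rw [inner_sub_left]
    have : (x₁ - x₂ : EuclideanSpace ℝ (Fin d1)) = -(x₂ - x₁) := by abel
    rw [this, inner_neg_right]
    ring
  have hgb : ⟪gradx f x₁ w₂ - gradx f x₂ w₁, x₂ - x₁⟫ ≤ l * (u + k) * u := by
    have hcs := real_inner_le_norm (gradx f x₁ w₂ - gradx f x₂ w₁) (x₂ - x₁)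
    have h1 := gradx_lip hf hl.le x₁ x₂ w₂ w₁
    have h2 : ‖x₁ - x₂‖ = u := by rw [hu, ← norm_neg]; congr 1; abel
    rw [h2, ← hk] at h1
    rw [← hu] at hcs
    nlinarith [norm_nonneg (gradx f x₁ w₂ - gradx f x₂ w₁), hu ▸ norm_nonneg (x₂ - x₁)]
  have hx1 : ‖x₁ - x₂‖ = u := by rw [hu, ← norm_neg]; congr 1; abel
  rw [hx1] at hi4
  have key : μ * k ^ 2 ≤ l * u * k + 2 * l * u ^ 2 := by nlinarith
  have hk0 : 0 ≤ k := norm_nonneg _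
  have hu0 : 0 ≤ u := norm_nonneg _
  have hlm : (0:ℝ) ≤ 3*l/μ := by positivity
  rcases le_or_gt k u with h | h
  · nlinarith
  · have hkpos : 0 < k := lt_of_le_of_lt hu0 h
    have h3 : μ * k ≤ 3 * l * u := by
      nlinarith [key, mul_nonneg (mul_nonneg hl.le hu0) (sub_nonneg.2 h.le), hkpos]
    have h4 : k ≤ 3*l/μ * u := by
      rw [div_mul_eq_mul_div, le_div_iff₀ hμ]
      nlinarith
    nlinarith

end Aux6
section Aux7
variable {d1 d2 : ℕ} {l μ : ℝ}
  {f : EuclideanSpace ℝ (Fin d1) → EuclideanSpace ℝ (Fin d2) → ℝ}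
  {Y : Set (EuclideanSpace ℝ (Fin d2))}

lemma grad_xstarz_zero (hf : IsLSmooth l f) (hl : 0 < l) (hμ : 0 < μ)
    (hYne : Y.Nonempty) (hYconv : Convex ℝ Y)
    (hconc : ∀ x, StrongConcaveOn Y μ (f x))
    {ystar : EuclideanSpace ℝ (Fin d1) → EuclideanSpace ℝ (Fin d2)}
    (hystar_mem : ∀ x, ystar x ∈ Y)
    (hystar : ∀ x, ∀ y ∈ Y, f x y ≤ f x (ystar x))
    {xstarz : EuclideanSpace ℝ (Fin d1) → EuclideanSpace ℝ (Fin d1)}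
    (hxstarz : ∀ z x, sSup ((fun y => fhat f (2 * l) (xstarz z) y z) '' Y)
        ≤ sSup ((fun y => fhat f (2 * l) x y z) '' Y))
    (z : EuclideanSpace ℝ (Fin d1)) :
    gradx f (xstarz z) (ystar (xstarz z)) + (2*l) • (xstarz z - z) = 0 := by
  set c := xstarz z with hc
  refine zero_of_inner_quad _ (l*(1+3*l/μ) + 3*l/2) (by positivity) fun h' => ?_
  set ys := ystar c with hys
  set w₂ := ystar (c + h') with hw₂
  have ha1 : fhat f (2*l) c ys z ≤ fhat f (2*l) (c+h') w₂ z := by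
    have h0 := hxstarz z (c + h')
    rwa [show (2:ℝ) * l = 2*l from rfl, sSup_img hYne hystar_mem hystar c z,
      sSup_img hYne hystar_mem hystar (c+h') z] at h0
  have ha2 := fhat_upper hf hl.le c (c+h') z w₂
  have he : c + h' - c = h' := by abel
  rw [he] at ha2
  have ha3 : fhat f (2*l) c w₂ z ≤ fhat f (2*l) c ys z :=
    add_le_add_left (hystar c _ (hystar_mem _)) _
  have hsplit : ⟪gradx f c w₂ + (2*l) • (c - z), h'⟫
      = ⟪gradx f c ys + (2*l) • (c - z), h'⟫ + ⟪gradx f c w₂ - gradx f c ys, h'⟫ := by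
    have hdec : gradx f c w₂ + (2*l) • (c - z)
        = (gradx f c ys + (2*l) • (c - z)) + (gradx f c w₂ - gradx f c ys) := by abel
    rw [hdec, inner_add_left]
  have hlipk : ‖gradx f c w₂ - gradx f c ys‖ ≤ l * ((1+3*l/μ) * ‖h'‖) := by
    have h1 := gradx_lip hf hl.le c c w₂ ys
    simp only [sub_self, norm_zero, zero_add] at h1
    have h2 := ystar_lip hf hl hμ hconc hYconv hystar_mem hystar c (c+h')
    rw [he] at h2
    have h3 : ‖w₂ - ys‖ ≤ (1+3*l/μ) * ‖h'‖ := h2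
    calc ‖gradx f c w₂ - gradx f c ys‖ ≤ l * ‖w₂ - ys‖ := h1
      _ ≤ l * ((1+3*l/μ) * ‖h'‖) := by
          exact mul_le_mul_of_nonneg_left h3 hl.le
  have hib : ⟪gradx f c w₂ - gradx f c ys, h'⟫ ≤ l*(1+3*l/μ)*‖h'‖^2 := by
    have hcs := real_inner_le_norm (gradx f c w₂ - gradx f c ys) h'
    nlinarith [norm_nonneg h', mul_le_mul_of_nonneg_right hlipk (norm_nonneg h')]
  rw [hsplit] at ha2
  linarith
end Aux7
section Aux8
set_option maxHeartbeats 1000000 in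
lemma final_algebra (l μ η q ρ s D G : ℝ) (hl : 0 < l) (hμ : 0 < μ) (hη : 0 < η)
    (hηl : η * l ≤ 1/1000) (hq : 0 ≤ q) (hρ : 0 ≤ ρ) (hs : 0 ≤ s) (hD : 0 ≤ D) (hG : 0 ≤ G)
    (hmaster : η*(l*q^2) + η*(μ*ρ^2) ≤ η*(l*s*ρ) + D*(ρ+D) + η*(l*(s+q+ρ)*D))
    (hls : l*s ≤ G) (hμl : μ*D^2 ≤ l*D^2) :
    q^2 ≤ 10/(μ*η^2*l)*D^2 + 10/(μ*l)*G^2 + 40/l^2*G^2 := by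
  have hpos : (0:ℝ) < μ*η^2*l^3 := by positivity
  have key : μ*η^2*l^3*q^2 ≤ 10*l^2*D^2 + 10*η^2*l^2*G^2 + 40*μ*η^2*l*G^2 := by
    have hm2 : 2*μ*η*l^2*(η*(l*q^2) + η*(μ*ρ^2))
        ≤ 2*μ*η*l^2*(η*(l*s*ρ) + D*(ρ+D) + η*(l*(s+q+ρ)*D)) :=
      mul_le_mul_of_nonneg_left hmaster (by positivity)
    have y1 : 2*μ*η^2*l^3*(s*ρ) ≤ μ^2*η^2*l^2*ρ^2/2 + 2*η^2*l^4*s^2 := by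
      nlinarith [sq_nonneg (μ*η*l*ρ - 2*η*l^2*s)]
    have y2 : 2*μ*η*l^2*(D*ρ) ≤ μ^2*η^2*l^2*ρ^2/2 + 2*l^2*D^2 := by
      nlinarith [sq_nonneg (μ*η*l*ρ - 2*l*D)]
    have y3 : 2*μ*η^2*l^3*(ρ*D) ≤ μ^2*η^2*l^2*ρ^2 + η^2*l^4*D^2 := by
      nlinarith [sq_nonneg (μ*η*l*ρ - η*l^2*D)]
    have y4 : 2*μ*η^2*l^3*(q*D) ≤ μ*η^2*l^3*q^2 + μ*η^2*l^3*D^2 := by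
      nlinarith [mul_nonneg (by positivity : (0:ℝ) ≤ μ*η^2*l^3) (sq_nonneg (q - D))]
    have y5 : 2*μ*η^2*l^3*(s*D) ≤ μ*η^2*l^3*s^2 + μ*η^2*l^3*D^2 := by
      nlinarith [mul_nonneg (by positivity : (0:ℝ) ≤ μ*η^2*l^3) (sq_nonneg (s - D))]
    have hcol : μ*η^2*l^3*q^2 ≤ 2*η^2*l^4*s^2 + μ*η^2*l^3*s^2
        + 2*μ*η*l^2*D^2 + 2*l^2*D^2 + η^2*l^4*D^2 + 2*μ*η^2*l^3*D^2 := by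
      linarith [hm2, y1, y2, y3, y4, y5]
    have hsG : l^2*s^2 ≤ G^2 := by
      nlinarith [mul_self_le_mul_self (mul_nonneg hl.le hs) hls]
    have hb1 : 2*η^2*l^4*s^2 ≤ 2*η^2*l^2*G^2 := by
      linarith [mul_le_mul_of_nonneg_left hsG (show (0:ℝ) ≤ 2*η^2*l^2 by positivity)]
    have hb2 : μ*η^2*l^3*s^2 ≤ μ*η^2*l*G^2 := by
      linarith [mul_le_mul_of_nonneg_left hsG (show (0:ℝ) ≤ μ*η^2*l by positivity)]
    have hηl2 : η^2*l^2 ≤ 1/1000000 := by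
      nlinarith [hηl, mul_nonneg hη.le hl.le]
    have hb3 : 2*μ*η*l^2*D^2 ≤ 2*l^2*D^2 := by
      have h1 : 2*η*l^2*(μ*D^2) ≤ 2*η*l^2*(l*D^2) :=
        mul_le_mul_of_nonneg_left hμl (by positivity)
      have h2 : 2*(η*l)*(l^2*D^2) ≤ 2*(1/1000)*(l^2*D^2) := by
        have := mul_le_mul_of_nonneg_right hηl (show (0:ℝ) ≤ l^2*D^2 by positivity)
        linarith
      have h3 : 2*(1/1000)*(l^2*D^2) ≤ 2*l^2*D^2 := by
        nlinarith [mul_nonneg (mul_nonneg hl.le hl.le) (sq_nonneg D)]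
      nlinarith [h1, h2, h3]
    have hb4 : η^2*l^4*D^2 ≤ l^2*D^2 := by
      have h2 := mul_le_mul_of_nonneg_right hηl2 (show (0:ℝ) ≤ l^2*D^2 by positivity)
      nlinarith [h2, mul_nonneg (mul_nonneg hl.le hl.le) (sq_nonneg D)]
    have hb5 : 2*μ*η^2*l^3*D^2 ≤ 2*l^2*D^2 := by
      have h1 : 2*η^2*l^3*(μ*D^2) ≤ 2*η^2*l^3*(l*D^2) :=
        mul_le_mul_of_nonneg_left hμl (by positivity)
      have h2 := mul_le_mul_of_nonneg_right hηl2 (show (0:ℝ) ≤ 2*l^2*D^2 by positivity)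
      nlinarith [h1, h2, mul_nonneg (mul_nonneg hl.le hl.le) (sq_nonneg D)]
    have hslack : (0:ℝ) ≤ l^2*D^2 := by positivity
    have hslack2 : (0:ℝ) ≤ η^2*l^2*G^2 := by positivity
    have hslack3 : (0:ℝ) ≤ μ*η^2*l*G^2 := by positivity
    linarith [hcol, hb1, hb2, hb3, hb4, hb5, hslack, hslack2, hslack3]
  have hRHS : 10/(μ*η^2*l)*D^2 + 10/(μ*l)*G^2 + 40/l^2*G^2
      = (10*l^2*D^2 + 10*η^2*l^2*G^2 + 40*μ*η^2*l*G^2)/(μ*η^2*l^3) := by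
    field_simp
  rw [hRHS, le_div_iff₀ hpos]
  linarith [key]

end Aux8

set_option maxHeartbeats 2000000 in
/-- with `p = 2l` and `ȳ = P_Y(y + η∇_y f(x,y))`,
`‖x*(y,z) − x*(z)‖² ≤ (10/(μη²l))‖y − ȳ‖² + (10/(μl))‖∇_x f̂(x,y,z)‖² + (40/l²)‖∇_x f̂(x,y,z)‖²`,
where `x*(z)` minimizes `x ↦ max_{y∈Y} f̂(x,y,z)`. -/
theorem statement8 {d1 d2 : ℕ} (l μ η : ℝ) (hl : 0 < l) (hμ : 0 < μ)
    (f : EuclideanSpace ℝ (Fin d1) → EuclideanSpace ℝ (Fin d2) → ℝ)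
    (hf : IsLSmooth l f)
    -- `Y` nonempty convex compact; `projY` the nearest-point projection onto `Y`
    (Y : Set (EuclideanSpace ℝ (Fin d2))) (hYne : Y.Nonempty) (hYconv : Convex ℝ Y)
    (hYcomp : IsCompact Y)
    (projY : EuclideanSpace ℝ (Fin d2) → EuclideanSpace ℝ (Fin d2))
    (hprojY_mem : ∀ v, projY v ∈ Y)
    (hprojY : ∀ v, ∀ w ∈ Y, ‖v - projY v‖ ≤ ‖v - w‖)
    -- `f(x,·)` is `μ`-strongly concave on `Y` with unique maximizer `y*(x)`
    (hconc : ∀ x, StrongConcaveOn Y μ (f x))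
    (ystar : EuclideanSpace ℝ (Fin d1) → EuclideanSpace ℝ (Fin d2))
    (hystar_mem : ∀ x, ystar x ∈ Y)
    (hystar : ∀ x, ∀ y ∈ Y, f x y ≤ f x (ystar x))
    -- `x*(y, z)`: minimizer of `x ↦ f̂(x, y, z)` with `p = 2l`
    (xstar : EuclideanSpace ℝ (Fin d2) → EuclideanSpace ℝ (Fin d1) → EuclideanSpace ℝ (Fin d1))
    (hxstar : ∀ y z x, fhat f (2 * l) (xstar y z) y z ≤ fhat f (2 * l) x y z)
    -- `x*(z)`: minimizer of `x ↦ Φ(x,z) = max_{y∈Y} f̂(x,y,z)`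
    (xstarz : EuclideanSpace ℝ (Fin d1) → EuclideanSpace ℝ (Fin d1))
    (hxstarz : ∀ z x, sSup ((fun y => fhat f (2 * l) (xstarz z) y z) '' Y)
        ≤ sSup ((fun y => fhat f (2 * l) x y z) '' Y))
    (hη : 0 < η) (hη' : η ≤ 1 / (1000 * l))
    (x z : EuclideanSpace ℝ (Fin d1)) (y : EuclideanSpace ℝ (Fin d2)) (hy : y ∈ Y) :
    ‖xstar y z - xstarz z‖ ^ 2
      ≤ 10 / (μ * η ^ 2 * l) * ‖y - projY (y + η • grady f x y)‖ ^ 2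
        + 10 / (μ * l) * ‖gradx f x y + (2 * l) • (x - z)‖ ^ 2
        + 40 / l ^ 2 * ‖gradx f x y + (2 * l) • (x - z)‖ ^ 2 := by
  have hg1 : gradx f (xstar y z) y + (2*l) • (xstar y z - z) = 0 :=
    grad_fhat_zero hf hl (xstar y z) z y (fun b => hxstar y z b)
  have hgs : gradx f (xstarz z) (ystar (xstarz z)) + (2*l) • (xstarz z - z) = 0 :=
    grad_xstarz_zero hf hl hμ hYne hYconv hconc hystar_mem hystar hxstarz z
  have hysmem := hystar_mem (xstarz z)
  have hybmem := hprojY_mem (y + η • grady f x y)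
  -- A1, A2
  have hA1 := fhat_lower hf hl.le (xstar y z) (xstarz z) z y
  rw [hg1, inner_zero_left, norm_sub_rev] at hA1
  have hA2 := fhat_lower hf hl.le (xstarz z) (xstar y z) z (ystar (xstarz z))
  rw [hgs, inner_zero_left] at hA2
  -- C1, C2
  have hC1 := sconc_fo hf hμ.le hconc (xstar y z) hy hysmem
  rw [norm_sub_rev] at hC1
  have hC2 := sconc_fo hf hμ.le hconc (xstarz z) hysmem hy
  have hmaster1 : l*‖xstar y z - xstarz z‖^2 + μ*‖y - ystar (xstarz z)‖^2
      ≤ ⟪grady f (xstar y z) y, ystar (xstarz z) - y⟫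
        + ⟪grady f (xstarz z) (ystar (xstarz z)), y - ystar (xstarz z)⟫ := by
    simp only [fhat] at hA1 hA2
    linarith [hA1, hA2, hC1, hC2]
  -- l*s ≤ Gn
  have hls : l * ‖x - xstar y z‖ ≤ ‖gradx f x y + (2 * l) • (x - z)‖ := by
    have hB1 := fhat_lower hf hl.le (xstar y z) x z y
    rw [hg1, inner_zero_left] at hB1
    have hB2 := fhat_lower hf hl.le x (xstar y z) z y
    rw [norm_sub_rev] at hB2
    have hGip := (abs_le.1 (abs_real_inner_le_norm
      (gradx f x y + (2*l) • (x - z)) (xstar y z - x))).1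
    rw [norm_sub_rev (xstar y z) x] at hGip
    have hq2 : l * ‖x - xstar y z‖^2
        ≤ ‖gradx f x y + (2 * l) • (x - z)‖ * ‖x - xstar y z‖ := by
      nlinarith [hB1, hB2, hGip]
    rcases (norm_nonneg (x - xstar y z)).eq_or_lt with h0 | h0
    · rw [← h0]
      simp [norm_nonneg]
    · nlinarith [hq2]
  -- μ D² ≤ l D²
  have hμlD : μ * ‖y - projY (y + η • grady f x y)‖^2
      ≤ l * ‖y - projY (y + η • grady f x y)‖^2 := by
    have k1 := sconc_fo hf hμ.le hconc x hy hybmem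
    rw [norm_sub_rev] at k1
    have k2 := sconc_fo hf hμ.le hconc x hybmem hy
    have k3 : ⟪grady f x y - grady f x (projY (y + η • grady f x y)),
        projY (y + η • grady f x y) - y⟫
        ≤ l * ‖y - projY (y + η • grady f x y)‖^2 := by
      have hlip := grady_lip hf hl.le x x y (projY (y + η • grady f x y))
      simp only [sub_self, norm_zero, zero_add] at hlip
      have hcs := real_inner_le_norm
        (grady f x y - grady f x (projY (y + η • grady f x y)))
        (projY (y + η • grady f x y) - y)
      rw [norm_sub_rev (projY (y + η • grady f x y)) y] at hcs
      nlinarith [mul_le_mul_of_nonneg_right hlip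
        (norm_nonneg (y - projY (y + η • grady f x y)))]
    have kid : ⟪grady f x y, projY (y + η • grady f x y) - y⟫
        + ⟪grady f x (projY (y + η • grady f x y)), y - projY (y + η • grady f x y)⟫
        = ⟪grady f x y - grady f x (projY (y + η • grady f x y)),
            projY (y + η • grady f x y) - y⟫ := by
      rw [inner_sub_left, show (y - projY (y + η • grady f x y) :
          EuclideanSpace ℝ (Fin d2)) = -(projY (y + η • grady f x y) - y) from by abel,
        inner_neg_right]
      ring
    nlinarith [k1, k2, k3, kid]
  -- inner bounds
  have hts : ⟪grady f (xstar y z) y - grady f x y, ystar (xstarz z) - y⟫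
      ≤ (l*‖x - xstar y z‖) * ‖y - ystar (xstarz z)‖ := by
    have hlip := grady_lip hf hl.le (xstar y z) x y y
    simp only [sub_self, norm_zero, add_zero] at hlip
    rw [norm_sub_rev (xstar y z) x] at hlip
    have hcs := real_inner_le_norm (grady f (xstar y z) y - grady f x y)
      (ystar (xstarz z) - y)
    rw [norm_sub_rev (ystar (xstarz z)) y] at hcs
    nlinarith [mul_le_mul_of_nonneg_right hlip (norm_nonneg (y - ystar (xstarz z))),
      norm_nonneg (ystar (xstarz z) - y)]
  have h2 : η * ⟪grady f x y, ystar (xstarz z) - projY (y + η • grady f x y)⟫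
      ≤ ‖y - projY (y + η • grady f x y)‖ * (‖y - ystar (xstarz z)‖
        + ‖y - projY (y + η • grady f x y)‖) := by
    have hproj := proj_char hYconv hprojY_mem hprojY (y + η • grady f x y) hysmem
    have e : (y + η • grady f x y) - projY (y + η • grady f x y)
        = η • grady f x y + (y - projY (y + η • grady f x y)) := by abel
    rw [e, inner_add_left, real_inner_smul_left] at hproj
    have hcs := (abs_le.1 (abs_real_inner_le_norm
      (y - projY (y + η • grady f x y))
      (ystar (xstarz z) - projY (y + η • grady f x y)))).1
    have htr : ‖ystar (xstarz z) - projY (y + η • grady f x y)‖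
        ≤ ‖y - ystar (xstarz z)‖ + ‖y - projY (y + η • grady f x y)‖ := by
      have htri := dist_triangle (ystar (xstarz z)) y (projY (y + η • grady f x y))
      rw [dist_eq_norm, dist_eq_norm, dist_eq_norm,
        norm_sub_rev (ystar (xstarz z)) y] at htri
      linarith
    nlinarith [hproj, hcs, htr,
      norm_nonneg (ystar (xstarz z) - projY (y + η • grady f x y)),
      norm_nonneg (y - projY (y + η • grady f x y)),
      mul_le_mul_of_nonneg_left htr (norm_nonneg (y - projY (y + η • grady f x y)))]
  have h3 : ⟪grady f x y - grady f (xstarz z) (ystar (xstarz z)),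
      projY (y + η • grady f x y) - y⟫
      ≤ (l*(‖x - xstar y z‖ + ‖xstar y z - xstarz z‖ + ‖y - ystar (xstarz z)‖))
        * ‖y - projY (y + η • grady f x y)‖ := by
    have hlip := grady_lip hf hl.le x (xstarz z) y (ystar (xstarz z))
    have htr2 : ‖x - xstarz z‖ ≤ ‖x - xstar y z‖ + ‖xstar y z - xstarz z‖ := by
      have htri := dist_triangle x (xstar y z) (xstarz z)
      rw [dist_eq_norm, dist_eq_norm, dist_eq_norm] at htri
      linarith
    have hgn : ‖grady f x y - grady f (xstarz z) (ystar (xstarz z))‖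
        ≤ l*(‖x - xstar y z‖ + ‖xstar y z - xstarz z‖ + ‖y - ystar (xstarz z)‖) := by
      nlinarith [hlip, htr2, hl.le, norm_nonneg (y - ystar (xstarz z))]
    have hcs := real_inner_le_norm
      (grady f x y - grady f (xstarz z) (ystar (xstarz z)))
      (projY (y + η • grady f x y) - y)
    rw [norm_sub_rev (projY (y + η • grady f x y)) y] at hcs
    nlinarith [mul_le_mul_of_nonneg_right hgn
      (norm_nonneg (y - projY (y + η • grady f x y))),
      norm_nonneg (grady f x y - grady f (xstarz z) (ystar (xstarz z)))]
  have h4 : ⟪grady f (xstarz z) (ystar (xstarz z)),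
      projY (y + η • grady f x y) - ystar (xstarz z)⟫ ≤ 0 :=
    max_fo hf hYconv (xstarz z) hysmem (hystar (xstarz z)) hybmem
  -- identities
  have i1 : ⟪grady f (xstar y z) y, ystar (xstarz z) - y⟫
      = ⟪grady f (xstar y z) y - grady f x y, ystar (xstarz z) - y⟫
        + (⟪grady f x y, ystar (xstarz z) - projY (y + η • grady f x y)⟫
          + ⟪grady f x y, projY (y + η • grady f x y) - y⟫) := by
    rw [inner_sub_left, ← inner_add_right,
      show (ystar (xstarz z) - projY (y + η • grady f x y))
        + (projY (y + η • grady f x y) - y) = ystar (xstarz z) - y from by abel]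
    ring
  have i2 : ⟪grady f x y, projY (y + η • grady f x y) - y⟫
      = ⟪grady f x y - grady f (xstarz z) (ystar (xstarz z)),
          projY (y + η • grady f x y) - y⟫
        + (⟪grady f (xstarz z) (ystar (xstarz z)),
            projY (y + η • grady f x y) - ystar (xstarz z)⟫
          + ⟪grady f (xstarz z) (ystar (xstarz z)), ystar (xstarz z) - y⟫) := by
    rw [inner_sub_left, ← inner_add_right,
      show (projY (y + η • grady f x y) - ystar (xstarz z))
        + (ystar (xstarz z) - y) = projY (y + η • grady f x y) - y from by abel]
    ring
  have i3 : ⟪grady f (xstarz z) (ystar (xstarz z)), ystar (xstarz z) - y⟫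
      = -⟪grady f (xstarz z) (ystar (xstarz z)), y - ystar (xstarz z)⟫ := by
    rw [show (ystar (xstarz z) - y : EuclideanSpace ℝ (Fin d2))
      = -(y - ystar (xstarz z)) from by abel, inner_neg_right]
  -- master
  have hmaster : η*(l*‖xstar y z - xstarz z‖^2) + η*(μ*‖y - ystar (xstarz z)‖^2)
      ≤ η*(l*‖x - xstar y z‖*‖y - ystar (xstarz z)‖)
        + ‖y - projY (y + η • grady f x y)‖ * (‖y - ystar (xstarz z)‖
            + ‖y - projY (y + η • grady f x y)‖)
        + η*(l*(‖x - xstar y z‖ + ‖xstar y z - xstarz z‖ + ‖y - ystar (xstarz z)‖)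
            * ‖y - projY (y + η • grady f x y)‖) := by
    have m1 := mul_le_mul_of_nonneg_left hmaster1 hη.le
    rw [i1, i2, i3] at m1
    have b1 := mul_le_mul_of_nonneg_left hts hη.le
    have b3 := mul_le_mul_of_nonneg_left h3 hη.le
    have b4 : η * ⟪grady f (xstarz z) (ystar (xstarz z)),
        projY (y + η • grady f x y) - ystar (xstarz z)⟫ ≤ 0 :=
      mul_nonpos_of_nonneg_of_nonpos hη.le h4
    nlinarith [m1, b1, h2, b3, b4]
  have hηl : η * l ≤ 1/1000 := by
    have h0 := mul_le_mul_of_nonneg_right hη' hl.le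
    have e : (1/(1000*l))*l = 1/1000 := by field_simp
    rw [e] at h0
    exact h0
  exact final_algebra l μ η ‖xstar y z - xstarz z‖ ‖y - ystar (xstarz z)‖
    ‖x - xstar y z‖ ‖y - projY (y + η • grady f x y)‖
    ‖gradx f x y + (2 * l) • (x - z)‖ hl hμ hη hηl (norm_nonneg _) (norm_nonneg _)
    (norm_nonneg _) (norm_nonneg _) (norm_nonneg _) hmaster hls hμlD
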